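/- arXiv:2601.15527 — 4 statements merged into one kernel-verified Lean document; each statement's English description precedes it below -/
import Mathlib

section
/- For an ordered set X = {x_1 < x_2 < ... < x_k} ⊆ [n], the number of permutations σ ∈ S_n whose descent top set is contained in X equals (k+1)^{x_1−1} · k^{x_2−x_1} · (k−1)^{x_3−x_2} · ... · 2^{x_k−x_{k−1}}. (When X = ∅ this count is 1.) -/
open Finset

/-- Positions of descents of a permutation of `Fin (n+1)` in one-line notation. -/
def descSet (n : ℕ) (σ : Equiv.Perm (Fin (n+1))) : Finset (Fin n) :=
  Finset.univ.filter (fun i : Fin n => σ i.succ < σ i.castSucc)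

/-- Number of descents. -/
def des (n : ℕ) (σ : Equiv.Perm (Fin (n+1))) : ℕ := (descSet n σ).card

/-- Descent top set, with values written 1-based (so `DT n σ ⊆ [2, n+1]`). -/
def DT (n : ℕ) (σ : Equiv.Perm (Fin (n+1))) : Finset ℕ :=
  (descSet n σ).image (fun i => (σ i.castSucc : ℕ) + 1)

/-- `β!̂ = (k+1)^{β₁} k^{β₂} ⋯ 2^{β_k}` for a tuple `β` of length `k`. -/
def hatFac (β : List ℕ) : ℕ :=
  (β.zipIdx.map (fun p => (β.length + 1 - p.2) ^ p.1)).prod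

/-- `α(X)!̂` where, for `X = {x₁ < … < x_k}`, `α(X) = (x₁ - 1, x₂ - x₁, …, x_k - x_{k-1})`. -/
def alphaHat (X : Finset ℕ) : ℕ :=
  hatFac (List.zipWith (fun a b => b - a) (1 :: X.sort (· ≤ ·)) (X.sort (· ≤ ·)))

def DTl : List ℕ → Finset ℕ
  | [] => ∅
  | [_] => ∅
  | a :: b :: t => (if b < a then {a} else ∅) ∪ DTl (b :: t)

@[simp] lemma DTl_nil : DTl [] = ∅ := rfl
@[simp] lemma DTl_single (a : ℕ) : DTl [a] = ∅ := rfl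
@[simp] lemma DTl_cons_cons (a b : ℕ) (t : List ℕ) :
    DTl (a :: b :: t) = (if b < a then {a} else ∅) ∪ DTl (b :: t) := rfl

lemma mem_DTl : ∀ {l : List ℕ} {x : ℕ},
    x ∈ DTl l ↔ ∃ i, ∃ h : i + 1 < l.length, l[i+1] < l[i] ∧ l[i] = x
  | [], x => by simp
  | [a], x => by simp
  | a :: b :: t, x => by
    simp only [DTl_cons_cons, Finset.mem_union]
    constructor
    · rintro (h | h)
      · by_cases hba : b < a
        · exact ⟨0, by simp, by simpa using hba, by simp [hba] at h; simp [h]⟩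
        · simp [hba] at h
      · obtain ⟨i, hi, h1, h2⟩ := mem_DTl.mp h
        exact ⟨i + 1, by simpa using hi, by simpa using h1, by simpa using h2⟩
    · rintro ⟨i, hi, h1, h2⟩
      cases i with
      | zero => left; simp_all
      | succ j =>
        right
        exact mem_DTl.mpr ⟨j, by simpa using hi, by simpa using h1, by simpa using h2⟩

def permToList {n : ℕ} (σ : Equiv.Perm (Fin (n+1))) : List ℕ :=
  List.ofFn (fun i => (σ i : ℕ) + 1)

@[simp] lemma length_permToList {n : ℕ} (σ : Equiv.Perm (Fin (n+1))) :
    (permToList σ).length = n + 1 := by simp [permToList]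

lemma getElem_permToList {n : ℕ} (σ : Equiv.Perm (Fin (n+1))) (i : ℕ)
    (h : i < (permToList σ).length) :
    (permToList σ)[i] = (σ ⟨i, by simpa using h⟩ : ℕ) + 1 := by
  simp only [permToList, List.getElem_ofFn]

lemma DT_eq {n : ℕ} (σ : Equiv.Perm (Fin (n+1))) : DT n σ = DTl (permToList σ) := by
  ext x
  simp only [DT, descSet, mem_image, mem_filter, mem_univ, true_and, mem_DTl]
  constructor
  · rintro ⟨i, hlt, hx⟩
    have hi1 : (i : ℕ) + 1 < (permToList σ).length := by simp only [length_permToList]; omega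
    refine ⟨(i : ℕ), hi1, ?_, ?_⟩
    · rw [getElem_permToList σ _ hi1, getElem_permToList σ _ (by omega)]
      have e1 : (⟨(i:ℕ)+1, by omega⟩ : Fin (n+1)) = i.succ := rfl
      have e2 : (⟨(i:ℕ), by omega⟩ : Fin (n+1)) = i.castSucc := rfl
      rw [e1, e2]; omega
    · rw [getElem_permToList σ _ (by omega)]
      have e2 : (⟨(i:ℕ), by omega⟩ : Fin (n+1)) = i.castSucc := rfl
      rw [e2]; omega
  · rintro ⟨i, hi, h1, h2⟩
    have hi' : i < n := by simpa using hi
    refine ⟨⟨i, hi'⟩, ?_, ?_⟩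
    · rw [getElem_permToList σ _ hi, getElem_permToList σ _ (by omega)] at h1
      have e1 : (⟨i+1, by omega⟩ : Fin (n+1)) = (⟨i, hi'⟩ : Fin n).succ := rfl
      have e2 : (⟨i, by omega⟩ : Fin (n+1)) = (⟨i, hi'⟩ : Fin n).castSucc := rfl
      rw [e1, e2] at h1; omega
    · rw [getElem_permToList σ _ (by omega)] at h2
      have e2 : (⟨i, by omega⟩ : Fin (n+1)) = (⟨i, hi'⟩ : Fin n).castSucc := rfl
      rw [e2] at h2; omega

lemma DTl_mid (m : ℕ) : ∀ (u w : List ℕ), (∀ a ∈ u, m < a) → (∀ a ∈ w, m < a) →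
    DTl (u ++ m :: w) = DTl (u ++ w) ∪ (u.getLast?.elim ∅ (fun b => {b}))
  | [], w, _, hw => by
    cases w with
    | nil => simp
    | cons c t =>
      have : ¬ c < m := by have := hw c (by simp); omega
      simp [this]
  | [a], w, hu, hw => by
    have ham : m < a := hu a (by simp)
    cases w with
    | nil => simp [ham]
    | cons c t =>
      have : ¬ c < m := by have := hw c (by simp); omega
      simp only [List.cons_append, List.nil_append, DTl_cons_cons, if_pos ham, this, if_false,
        List.getLast?_singleton, Option.elim_some]
      ext x
      by_cases hca : c < a <;> simp [hca] <;> tauto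
  | a :: c :: u', w, hu, hw => by
    have h1 : ∀ x ∈ c :: u', m < x := fun x hx => hu x (List.mem_cons_of_mem _ hx)
    have IH := DTl_mid m (c :: u') w h1 hw
    simp only [List.cons_append, DTl_cons_cons] at *
    rw [IH, List.getLast?_cons_cons, Finset.union_assoc]

def arr (S : Finset ℕ) : Finset (List ℕ) :=
  ⟨(↑((S.sort (·≤·)).permutations) : Multiset (List ℕ)),
    Multiset.coe_nodup.mpr (List.nodup_permutations _ (S.sort_nodup (·≤·)))⟩

lemma mem_arr {S : Finset ℕ} {l : List ℕ} : l ∈ arr S ↔ l.Nodup ∧ l.toFinset = S := by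
  have : l ∈ arr S ↔ List.Perm l (S.sort (·≤·)) := by
    simp [arr, Finset.mem_mk, ← List.mem_permutations]
  rw [this]
  constructor
  · intro h
    exact ⟨h.nodup_iff.mpr (S.sort_nodup _),
      (List.toFinset_eq_of_perm _ _ h).trans (S.sort_toFinset _)⟩
  · rintro ⟨h1, h2⟩
    exact List.perm_of_nodup_nodup_toFinset_eq h1 (S.sort_nodup _)
      (h2.trans (S.sort_toFinset _).symm)

lemma exists_decomp {l : List ℕ} (hn : l.Nodup) {m : ℕ} (hm : m ∈ l) :
    ∃ u w, l = u ++ m :: w ∧ m ∉ u ∧ m ∉ w := by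
  obtain ⟨u, w, rfl⟩ := List.append_of_mem hm
  rw [List.nodup_append] at hn
  obtain ⟨hu, hw, hd⟩ := hn
  exact ⟨u, w, rfl, fun h => hd m h m List.mem_cons_self rfl,
    (List.nodup_cons.mp hw).1⟩

lemma erase_decomp {u w : List ℕ} {m : ℕ} (hu : m ∉ u) : (u ++ m :: w).erase m = u ++ w := by
  rw [List.erase_append_right _ hu, List.erase_cons_head]

lemma ins_indexOf {m : ℕ} {l' : List ℕ} (hm : m ∉ l') {i : ℕ} (hi : i ≤ l'.length) :
    (l'.take i ++ m :: l'.drop i).idxOf m = i := by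
  rw [List.idxOf_append_of_notMem (fun h => hm (List.mem_of_mem_take h))]
  simp [List.length_take, Nat.min_eq_left hi]

lemma fiber_card (X S : Finset ℕ) (m : ℕ) (hmS : m ∈ S) (hmin : ∀ b ∈ S, m ≤ b)
    {l' : List ℕ} (hl' : l' ∈ (arr (S.erase m)).filter (fun l => DTl l ⊆ X)) :
    (((arr S).filter (fun l => DTl l ⊆ X)).filter (fun l => l.erase m = l')).card
      = (X ∩ S.erase m).card + 1 := by
  rw [Finset.mem_filter, mem_arr] at hl'
  obtain ⟨⟨hnd', htf'⟩, hDT'⟩ := hl'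
  have helem' : ∀ a ∈ l', m < a := by
    intro a ha
    have haS : a ∈ S.erase m := by rw [← htf']; exact List.mem_toFinset.mpr ha
    exact lt_of_le_of_ne (hmin a (Finset.mem_of_mem_erase haS))
      (Ne.symm (Finset.ne_of_mem_erase haS))
  have hml' : m ∉ l' := fun h => lt_irrefl m (helem' m h)
  have hbl' : ∀ b ∈ X ∩ S.erase m, b ∈ l' := by
    intro b hb
    rw [← List.mem_toFinset, htf']
    exact (Finset.mem_inter.mp hb).2
  set P : Finset ℕ := insert 0 ((X ∩ S.erase m).image (fun b => l'.idxOf b + 1)) with hP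
  have hmemP : ∀ i ∈ P, i ≤ l'.length := by
    intro i hi
    rcases Finset.mem_insert.mp hi with rfl | hi
    · omega
    · obtain ⟨b, hb, rfl⟩ := Finset.mem_image.mp hi
      have := List.idxOf_lt_length_iff.mpr (hbl' b hb)
      omega
  have himg : ((arr S).filter (fun l => DTl l ⊆ X)).filter (fun l => l.erase m = l')
      = P.image (fun i => l'.take i ++ m :: l'.drop i) := by
    ext l
    simp only [Finset.mem_filter, mem_arr, Finset.mem_image]
    constructor
    · rintro ⟨⟨⟨hnd, htf⟩, hDT⟩, herase⟩
      have hml : m ∈ l := by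
        rw [← List.mem_toFinset, htf]; exact hmS
      obtain ⟨u, w, rfl, hmu, hmw⟩ := exists_decomp hnd hml
      have hl'eq : l' = u ++ w := by rw [← herase, erase_decomp hmu]
      have huw : ∀ a ∈ u ++ w, m < a := by
        intro a ha; exact helem' a (hl'eq ▸ ha)
      have hmid := DTl_mid m u w (fun a ha => huw a (List.mem_append_left _ ha))
        (fun a ha => huw a (List.mem_append_right _ ha))
      have hlenP : u.length ∈ P := by
        rcases List.eq_nil_or_concat u with rfl | ⟨u₀, b, rfl⟩
        · exact Finset.mem_insert_self _ _
        · simp only [List.concat_eq_append] at hmu hl'eq hmid hDT hnd ⊢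
          have hbX : b ∈ X := by
            apply hDT
            rw [hmid]
            apply Finset.mem_union_right
            rw [List.getLast?_concat]
            simp
          have hbS : b ∈ S.erase m := by
            rw [← htf']
            apply List.mem_toFinset.mpr
            rw [hl'eq]
            exact List.mem_append_left _ (List.mem_append_right _ (List.mem_singleton_self _))
          have hbu₀ : b ∉ u₀ := by
            have hnd3 : (u₀ ++ [b]).Nodup := hnd.of_append_left
            rw [List.nodup_append] at hnd3
            exact fun h => hnd3.2.2 b h b (List.mem_singleton_self _) rfl
          have hidx : l'.idxOf b = u₀.length := by
            rw [hl'eq, List.append_assoc, List.singleton_append,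
              List.idxOf_append_of_notMem hbu₀, List.idxOf_cons_self]
            omega
          apply Finset.mem_insert_of_mem
          apply Finset.mem_image.mpr
          refine ⟨b, Finset.mem_inter.mpr ⟨hbX, hbS⟩, ?_⟩
          rw [hidx]
          simp
      refine ⟨u.length, hlenP, ?_⟩
      rw [hl'eq, List.take_left, List.drop_left]
    · rintro ⟨i, hiP, rfl⟩
      have hi : i ≤ l'.length := hmemP i hiP
      have hperm : List.Perm (l'.take i ++ m :: l'.drop i) (m :: l') := by
        have := @List.perm_middle _ m (l'.take i) (l'.drop i)
        rwa [List.take_append_drop] at this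
      have hmu : m ∉ l'.take i := fun h => hml' (List.mem_of_mem_take h)
      have htk : ∀ a ∈ l'.take i, m < a := fun a ha => helem' a (List.mem_of_mem_take ha)
      have hdr : ∀ a ∈ l'.drop i, m < a := fun a ha => helem' a (List.mem_of_mem_drop ha)
      have hmid := DTl_mid m (l'.take i) (l'.drop i) htk hdr
      refine ⟨⟨⟨?_, ?_⟩, ?_⟩, ?_⟩
      · exact hperm.nodup_iff.mpr (List.nodup_cons.mpr ⟨hml', hnd'⟩)
      · rw [List.toFinset_eq_of_perm _ _ hperm]
        simp only [List.toFinset_cons, htf']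
        exact Finset.insert_erase hmS
      · rw [hmid, List.take_append_drop]
        apply Finset.union_subset hDT'
        rcases Finset.mem_insert.mp hiP with rfl | hmem
        · simp
        · obtain ⟨b, hb, rfl⟩ := Finset.mem_image.mp hmem
          have hbidx : l'.idxOf b < l'.length := List.idxOf_lt_length_iff.mpr (hbl' b hb)
          have htake : l'.take (l'.idxOf b + 1) = l'.take (l'.idxOf b) ++ [b] := by
            rw [List.take_succ]
            congr 1
            rw [List.getElem?_eq_getElem hbidx, List.getElem_idxOf hbidx]
            rfl
          rw [htake, List.getLast?_concat]
          simp only [Option.elim_some]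
          exact Finset.singleton_subset_iff.mpr (Finset.mem_inter.mp hb).1
      · rw [erase_decomp hmu, List.take_append_drop]
  have hinj : Set.InjOn (fun i => l'.take i ++ m :: l'.drop i) ↑P := by
    intro i hi j hj hij
    simp only at hij
    have h1 := ins_indexOf hml' (hmemP i hi)
    rw [hij, ins_indexOf hml' (hmemP j hj)] at h1
    omega
  have hinj2 : Set.InjOn (fun b => l'.idxOf b + 1) ↑(X ∩ S.erase m) := by
    intro b hb b' hb' hbb'
    simp only at hbb'
    have h1 : l'.idxOf b < l'.length := List.idxOf_lt_length_iff.mpr (hbl' b hb)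
    have h2 : l'.idxOf b' < l'.length := List.idxOf_lt_length_iff.mpr (hbl' b' hb')
    have he : l'.idxOf b = l'.idxOf b' := by omega
    calc b = l'[l'.idxOf b] := (List.getElem_idxOf h1).symm
    _ = l'[l'.idxOf b'] := by congr 1
    _ = b' := List.getElem_idxOf h2
  have h0 : (0:ℕ) ∉ (X ∩ S.erase m).image (fun b => l'.idxOf b + 1) := by
    intro h
    obtain ⟨b, _, hb⟩ := Finset.mem_image.mp h
    omega
  rw [himg, Finset.card_image_of_injOn hinj, hP, Finset.card_insert_of_notMem h0,
    Finset.card_image_of_injOn hinj2, Nat.add_comm]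

lemma count_arr (X : Finset ℕ) (S : Finset ℕ) :
    ((arr S).filter (fun l => DTl l ⊆ X)).card
      = ∏ v ∈ S, (((X ∩ S).filter (fun x => v < x)).card + 1) := by
  induction S using Finset.strongInduction with
  | _ S ih =>
  rcases S.eq_empty_or_nonempty with rfl | hS
  · have : (arr ∅).filter (fun l => DTl l ⊆ X) = {[]} := by
      ext l
      simp only [Finset.mem_filter, mem_arr, Finset.mem_singleton]
      constructor
      · rintro ⟨⟨hnd, htf⟩, _⟩
        simpa using List.toFinset_eq_empty_iff l |>.mp htf
      · rintro rfl
        simp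
    rw [this]
    simp
  · obtain ⟨m, hmS, hmin⟩ : ∃ m ∈ S, ∀ b ∈ S, m ≤ b :=
      ⟨S.min' hS, S.min'_mem hS, fun b hb => S.min'_le b hb⟩
    have hSm : ∀ x ∈ S.erase m, m < x := fun x hx =>
      lt_of_le_of_ne (hmin x (Finset.mem_of_mem_erase hx)) (Ne.symm (Finset.ne_of_mem_erase hx))
    have hmap : ∀ l ∈ (arr S).filter (fun l => DTl l ⊆ X),
        l.erase m ∈ (arr (S.erase m)).filter (fun l => DTl l ⊆ X) := by
      intro l hl
      rw [Finset.mem_filter, mem_arr] at hl ⊢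
      obtain ⟨⟨hnd, htf⟩, hDT⟩ := hl
      have hml : m ∈ l := by rw [← List.mem_toFinset, htf]; exact hmS
      obtain ⟨u, w, rfl, hmu, hmw⟩ := exists_decomp hnd hml
      have helems : ∀ a ∈ u ++ w, m < a := by
        intro a ha
        have haS : a ∈ S := by
          rw [← htf]
          apply List.mem_toFinset.mpr
          rcases List.mem_append.mp ha with h | h
          · exact List.mem_append_left _ h
          · exact List.mem_append_right _ (List.mem_cons_of_mem _ h)
        have hne : a ≠ m := by
          rintro rfl
          rcases List.mem_append.mp ha with h | h
          exacts [hmu h, hmw h]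
        exact lt_of_le_of_ne (hmin a haS) (Ne.symm hne)
      have hmid := DTl_mid m u w (fun a ha => helems a (List.mem_append_left _ ha))
        (fun a ha => helems a (List.mem_append_right _ ha))
      rw [erase_decomp hmu]
      refine ⟨⟨?_, ?_⟩, ?_⟩
      · exact (List.perm_middle.nodup_iff.mp hnd).of_cons
      · ext x
        rw [List.mem_toFinset, Finset.mem_erase, ← htf, List.mem_toFinset]
        constructor
        · intro hx
          have hxm : x ≠ m := by
            rintro rfl
            rcases List.mem_append.mp hx with h | h
            exacts [hmu h, hmw h]
          refine ⟨hxm, ?_⟩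
          rcases List.mem_append.mp hx with h | h
          · exact List.mem_append_left _ h
          · exact List.mem_append_right _ (List.mem_cons_of_mem _ h)
        · rintro ⟨hxm, hx⟩
          rcases List.mem_append.mp hx with h | h
          · exact List.mem_append_left _ h
          · rcases List.mem_cons.mp h with rfl | h
            · exact absurd rfl hxm
            · exact List.mem_append_right _ h
      · rw [hmid] at hDT
        exact fun x hx => hDT (Finset.mem_union_left _ hx)
    rw [Finset.card_eq_sum_card_fiberwise hmap]
    have hsum : ∀ l' ∈ (arr (S.erase m)).filter (fun l => DTl l ⊆ X),
        (((arr S).filter (fun l => DTl l ⊆ X)).filter (fun l => l.erase m = l')).card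
          = (X ∩ S.erase m).card + 1 := fun l' hl' => fiber_card X S m hmS hmin hl'
    rw [Finset.sum_congr rfl hsum, Finset.sum_const, smul_eq_mul,
      ih (S.erase m) (Finset.erase_ssubset hmS)]
    have hfac : ∀ v ∈ S.erase m,
        ((X ∩ S.erase m).filter (fun x => v < x)).card + 1
          = ((X ∩ S).filter (fun x => v < x)).card + 1 := by
      intro v hv
      congr 1
      congr 1
      ext x
      simp only [Finset.mem_filter, Finset.mem_inter, Finset.mem_erase]
      constructor
      · rintro ⟨⟨h1, _, h2⟩, h3⟩
        exact ⟨⟨h1, h2⟩, h3⟩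
      · rintro ⟨⟨h1, h2⟩, h3⟩
        have : x ≠ m := by
          rintro rfl
          exact absurd (hSm v hv) (by omega)
        exact ⟨⟨h1, this, h2⟩, h3⟩
    have hset : (X ∩ S).filter (fun x => m < x) = X ∩ S.erase m := by
      ext x
      simp only [Finset.mem_inter, Finset.mem_erase, Finset.mem_filter]
      constructor
      · rintro ⟨⟨h1, h2⟩, h3⟩
        exact ⟨h1, by omega, h2⟩
      · rintro ⟨h1, h2, h3⟩
        exact ⟨⟨h1, h3⟩, lt_of_le_of_ne (hmin x h3) (Ne.symm h2)⟩
    rw [Finset.prod_congr rfl hfac, ← Finset.mul_prod_erase S _ hmS, hset]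
    ring

@[simp] lemma hatFac_nil : hatFac [] = 1 := rfl

lemma enumFrom_map_prod (g : ℕ → ℕ → ℕ) :
    ∀ (β : List ℕ) (i : ℕ),
      ((β.zipIdx (i+1)).map (fun p => g p.2 p.1)).prod
        = ((β.zipIdx i).map (fun p => g (p.2+1) p.1)).prod
  | [], _ => rfl
  | a :: t, i => by
    simp only [List.zipIdx_cons, List.map_cons, List.prod_cons]
    rw [enumFrom_map_prod g t (i+1)]

lemma hatFac_cons (d : ℕ) (β : List ℕ) :
    hatFac (d :: β) = (β.length + 2) ^ d * hatFac β := by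
  simp only [hatFac, List.zipIdx_cons, List.map_cons, List.prod_cons, List.length_cons,
    Nat.sub_zero, Nat.zero_add]
  have h := enumFrom_map_prod (fun i e => (β.length + 1 + 1 - i) ^ e) β 0
  simp only [Nat.zero_add] at h
  rw [h]
  refine congrArg₂ (· * ·) rfl ?_
  exact congrArg List.prod (List.map_congr_left fun p _ => by congr 1; omega)

lemma zipWith_sub_shift (c : ℕ) :
    ∀ (xs : List ℕ) (p : ℕ), (∀ a ∈ xs, c ≤ a) → c ≤ p →
      List.zipWith (fun a b => b - a) ((p - c) :: xs.map (· - c)) (xs.map (· - c))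
        = List.zipWith (fun a b => b - a) (p :: xs) xs
  | [], p, _, _ => rfl
  | a :: t, p, h, hp => by
    simp only [List.map_cons, List.zipWith_cons_cons]
    have h1 : a - c - (p - c) = a - p := by have := h a (by simp); omega
    rw [h1, zipWith_sub_shift c t a (fun x hx => h x (by simp [hx])) (h a (by simp))]

lemma prodC : ∀ (xs : List ℕ), ∀ (N : ℕ), List.Pairwise (· < ·) xs →
    (∀ x ∈ xs, 1 ≤ x ∧ x ≤ N) →
    ∏ v ∈ Icc 1 N, (xs.countP (fun x => decide (v < x)) + 1)
      = hatFac (List.zipWith (fun a b => b - a) (1 :: xs) xs)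
  | [], N, _, _ => by simp
  | x :: xs, N, hsort, hbd => by
    obtain ⟨hx1, hxN⟩ := hbd x (by simp)
    have hgt : ∀ a ∈ xs, x < a := fun a ha => (List.pairwise_cons.mp hsort).1 a ha
    rw [← Finset.Ico_add_one_right_eq_Icc,
      ← Finset.prod_Ico_consecutive _ (show 1 ≤ x by omega) (show x ≤ N+1 by omega)]
    have h1 : ∀ v ∈ Ico 1 x, ((x :: xs : List ℕ).countP (fun y => decide (v < y)) + 1)
        = xs.length + 2 := by
      intro v hv
      rw [Finset.mem_Ico] at hv
      have hall : xs.countP (fun y => decide (v < y)) = xs.length :=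
        List.countP_eq_length.mpr (fun a ha => decide_eq_true (by have := hgt a ha; omega))
      have hvx : decide (v < x) = true := decide_eq_true (by omega)
      rw [List.countP_cons, hall, hvx, if_pos rfl]
    rw [Finset.prod_congr rfl h1, Finset.prod_const, Nat.card_Ico]
    have h2 : ∀ v ∈ Ico x (N+1), ((x :: xs : List ℕ).countP (fun y => decide (v < y)) + 1)
        = (xs.countP (fun y => decide (v < y)) + 1) := by
      intro v hv
      rw [Finset.mem_Ico] at hv
      have hvx : decide (v < x) = false := decide_eq_false (by omega)
      rw [List.countP_cons, hvx, if_neg (by simp)]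
    rw [Finset.prod_congr rfl h2]
    have hmap : Finset.map (addRightEmbedding (x-1)) (Ico 1 (N - x + 2)) = Ico x (N+1) := by
      rw [Finset.map_add_right_Ico]
      congr 1 <;> omega
    rw [← hmap, Finset.prod_map]
    have h3 : ∀ v ∈ Ico 1 (N - x + 2),
        (xs.countP (fun y => decide ((addRightEmbedding (x-1)) v < y)) + 1)
          = ((xs.map (· - (x-1))).countP (fun y => decide (v < y)) + 1) := by
      intro v hv
      congr 1
      rw [List.countP_map]
      apply List.countP_congr
      intro a ha
      have hax := hgt a ha
      simp only [Function.comp, addRightEmbedding_apply, decide_eq_true_eq]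
      omega
    rw [Finset.prod_congr rfl h3]
    have hsort' : List.Pairwise (· < ·) (xs.map (· - (x-1))) := by
      rw [List.pairwise_map]
      apply List.Pairwise.imp_of_mem (l := xs) ?_ ((List.pairwise_cons.mp hsort).2)
      intro a b ha hb hab
      have := hgt a ha
      omega
    have hbd' : ∀ y ∈ xs.map (· - (x-1)), 1 ≤ y ∧ y ≤ N - x + 1 := by
      intro y hy
      obtain ⟨a, ha, rfl⟩ := List.mem_map.mp hy
      have h4 := hgt a ha
      have h5 := (hbd a (by simp [ha])).2
      omega
    have IH := prodC (xs.map (· - (x-1))) (N - x + 1) hsort' hbd'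
    rw [show N - x + 2 = (N - x + 1) + 1 from rfl, Finset.Ico_add_one_right_eq_Icc, IH]
    have hz := zipWith_sub_shift (x-1) xs x (fun a ha => by have := hgt a ha; omega) (by omega)
    rw [show x - (x-1) = 1 by omega] at hz
    rw [hz]
    have hfin : List.zipWith (fun a b => b - a) (1 :: x :: xs) (x :: xs)
        = (x - 1) :: List.zipWith (fun a b => b - a) (x :: xs) xs := by
      simp [List.zipWith_cons_cons]
    rw [hfin, hatFac_cons]
    congr 2
    rw [List.length_zipWith, List.length_cons]
    omega
termination_by xs _ => xs.length
decreasing_by all_goals simp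

lemma card_filter_eq_countP_sort (X : Finset ℕ) (p : ℕ → Prop) [DecidablePred p] :
    (X.filter p).card = (X.sort (· ≤ ·)).countP (fun a => decide (p a)) := by
  rw [Finset.card_def, Finset.filter_val, ← Multiset.countP_eq_card_filter,
    ← Multiset.coe_countP, Finset.sort_eq]

lemma step1 (n : ℕ) (X : Finset ℕ) :
    (Finset.univ.filter (fun σ : Equiv.Perm (Fin (n+1)) => DT n σ ⊆ X)).card
      = ((arr (Finset.Icc 1 (n+1))).filter (fun l => DTl l ⊆ X)).card := by
  apply Finset.card_bij (fun σ _ => permToList σ)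
  · intro σ hσ
    simp only [Finset.mem_filter, Finset.mem_univ, true_and] at hσ
    rw [Finset.mem_filter, mem_arr]
    refine ⟨⟨?_, ?_⟩, ?_⟩
    · simp only [permToList, List.nodup_ofFn]
      intro i j hij
      simp only at hij
      exact σ.injective (Fin.ext (by omega))
    · ext x
      simp only [List.mem_toFinset, permToList, List.mem_ofFn, Finset.mem_Icc, Set.mem_range]
      constructor
      · rintro ⟨i, rfl⟩
        have := (σ i).isLt
        omega
      · rintro ⟨h1, h2⟩
        refine ⟨σ.symm ⟨x - 1, by omega⟩, ?_⟩
        rw [Equiv.apply_symm_apply]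
        simp only
        omega
    · rw [← DT_eq]; exact hσ
  · intro σ _ τ _ h
    have h1 := List.ofFn_inj.mp h
    ext i
    have h2 := congrFun h1 i
    omega
  · intro l hl
    rw [Finset.mem_filter, mem_arr] at hl
    obtain ⟨⟨hnd, htf⟩, hDT⟩ := hl
    have hlen : l.length = n + 1 := by
      rw [← List.toFinset_card_of_nodup hnd, htf, Nat.card_Icc]
      omega
    have hbd : ∀ a ∈ l, 1 ≤ a ∧ a ≤ n + 1 := by
      intro a ha
      have : a ∈ Finset.Icc 1 (n+1) := by rw [← htf]; exact List.mem_toFinset.mpr ha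
      rw [Finset.mem_Icc] at this
      exact this
    let idx : Fin (n+1) → Fin l.length := fun i => Fin.cast hlen.symm i
    have hmemg : ∀ i : Fin (n+1), l.get (idx i) ∈ l :=
      fun i => List.get_mem l (idx i)
    set g : Fin (n+1) → Fin (n+1) := fun i =>
      ⟨l.get (idx i) - 1, by have := hbd _ (hmemg i); omega⟩ with hg
    have hginj : Function.Injective g := by
      intro i j hij
      have h1 := hbd _ (hmemg i)
      have h2 := hbd _ (hmemg j)
      have h3 : (g i : ℕ) = (g j : ℕ) := by rw [hij]
      simp only [hg] at h3
      have h4 : l.get (idx i) = l.get (idx j) := by omega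
      have h5 : idx i = idx j := List.nodup_iff_injective_get.mp hnd h4
      have h6 := congrArg Fin.val h5
      exact Fin.ext h6
    set σ : Equiv.Perm (Fin (n+1)) :=
      Equiv.ofBijective g (Finite.injective_iff_bijective.mp hginj) with hσ
    have hperm : permToList σ = l := by
      apply List.ext_get (by simp [hlen])
      intro k h1 h2
      simp only [permToList, List.get_ofFn]
      have hb := hbd _ (List.get_mem l ⟨k, h2⟩)
      show l.get ⟨k, h2⟩ - 1 + 1 = l.get ⟨k, h2⟩
      omega
    refine ⟨σ, ?_, hperm⟩
    rw [Finset.mem_filter]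
    refine ⟨Finset.mem_univ _, ?_⟩
    rw [DT_eq, hperm]
    exact hDT

/-- The number of permutations whose descent top set is contained in `X` is `α(X)!̂`. -/
theorem card_DT_subset (n : ℕ) (X : Finset ℕ) (hX : X ⊆ Finset.Icc 1 (n+1)) :
    (Finset.univ.filter (fun σ : Equiv.Perm (Fin (n+1)) => DT n σ ⊆ X)).card = alphaHat X := by
  rw [step1, count_arr, Finset.inter_eq_left.mpr hX]
  have hcount : ∀ v ∈ Finset.Icc 1 (n+1),
      ((X.filter (fun x => v < x)).card + 1)
        = ((X.sort (· ≤ ·)).countP (fun x => decide (v < x)) + 1) := by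
    intro v _
    rw [card_filter_eq_countP_sort]
  rw [Finset.prod_congr rfl hcount]
  have hsorted : List.Pairwise (· < ·) (X.sort (· ≤ ·)) := List.sortedLT_iff_pairwise.mp (Finset.sortedLT_sort X)
  have hbd : ∀ x ∈ X.sort (· ≤ ·), 1 ≤ x ∧ x ≤ n + 1 := by
    intro x hx
    have : x ∈ X := (Finset.mem_sort _).mp hx
    have := hX this
    rw [Finset.mem_Icc] at this
    exact this
  rw [prodC (X.sort (· ≤ ·)) (n+1) hsorted hbd]
  rfl
end

section
/- Let τ: [n+2] → [n+2] be given by τ(i) = n+3−i. For every K ⊆ [2, n+1], the number of permutations σ ∈ S_{n+1} with DT(σ) = [2, n+1] ∖ K equals the number of permutations σ ∈ S_{n+1} with DT(σ) = τ(K) (note τ(K) ⊆ [2, n+1] since K ⊆ [2, n+1]). -/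
open Finset

namespace DTAux

def gv (n v : ℕ) : ℕ := if v = 0 then 0 else n + 1 - v

lemma gv_le {n v : ℕ} (hv : v ≤ n) : gv n v ≤ n := by unfold gv; split <;> omega

lemma gv_gv {n v : ℕ} (hv : v ≤ n) : gv n (gv n v) = v := by unfold gv; split_ifs <;> omega

lemma gv_zero (n : ℕ) : gv n 0 = 0 := if_pos rfl

lemma gv_ne {n v : ℕ} (h : v ≠ 0) : gv n v = n + 1 - v := if_neg h

def gPerm (n : ℕ) : Equiv.Perm (Fin (n+1)) where
  toFun v := ⟨gv n v, Nat.lt_succ_of_le (gv_le (Nat.lt_succ_iff.1 v.2))⟩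
  invFun v := ⟨gv n v, Nat.lt_succ_of_le (gv_le (Nat.lt_succ_iff.1 v.2))⟩
  left_inv v := Fin.ext (gv_gv (Nat.lt_succ_iff.1 v.2))
  right_inv v := Fin.ext (gv_gv (Nat.lt_succ_iff.1 v.2))

def rv (n p i : ℕ) : ℕ :=
  if i + p + 1 ≤ n then i + p + 1 else if i + p = n then p else i + p - (n+1)

lemma rv_le {n p i : ℕ} (hp : p ≤ n) (hi : i ≤ n) : rv n p i ≤ n := by
  unfold rv; split_ifs <;> omega

lemma rv_rv {n p i : ℕ} (hp : p ≤ n) (hi : i ≤ n) : rv n (n - p) (rv n p i) = i := by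
  unfold rv; split_ifs <;> omega

lemma rv_rv' {n p i : ℕ} (hp : p ≤ n) (hi : i ≤ n) : rv n p (rv n (n - p) i) = i := by
  have h := rv_rv (n := n) (p := n - p) (i := i) (by omega) hi
  have hp' : n - (n - p) = p := by omega
  rwa [hp'] at h

def rho (n : ℕ) (p : Fin (n+1)) : Equiv.Perm (Fin (n+1)) where
  toFun i := ⟨rv n p i, Nat.lt_succ_of_le (rv_le (Nat.lt_succ_iff.1 p.2) (Nat.lt_succ_iff.1 i.2))⟩
  invFun i := ⟨rv n (n - p) i,
    Nat.lt_succ_of_le (rv_le (by omega) (Nat.lt_succ_iff.1 i.2))⟩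
  left_inv i := Fin.ext (rv_rv (Nat.lt_succ_iff.1 p.2) (Nat.lt_succ_iff.1 i.2))
  right_inv i := Fin.ext (rv_rv' (Nat.lt_succ_iff.1 p.2) (Nat.lt_succ_iff.1 i.2))

def Phi (n : ℕ) (σ : Equiv.Perm (Fin (n+1))) : Equiv.Perm (Fin (n+1)) :=
  ((rho n (σ⁻¹ 0)).trans σ).trans (gPerm n)

/-- the one-line word of `σ`, as a total function `ℕ → ℕ`. -/
def av (n : ℕ) (σ : Equiv.Perm (Fin (n+1))) (j : ℕ) : ℕ :=
  if h : j < n+1 then (σ ⟨j, h⟩ : ℕ) else 0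

lemma av_lt {n : ℕ} (σ : Equiv.Perm (Fin (n+1))) {j : ℕ} (h : j < n+1) :
    av n σ j = (σ ⟨j, h⟩ : ℕ) := dif_pos h

lemma av_le {n : ℕ} (σ : Equiv.Perm (Fin (n+1))) (j : ℕ) : av n σ j ≤ n := by
  unfold av; split
  · exact Nat.lt_succ_iff.1 (σ _).2
  · omega

lemma av_inj {n : ℕ} (σ : Equiv.Perm (Fin (n+1))) {j k : ℕ} (hj : j < n+1) (hk : k < n+1)
    (h : av n σ j = av n σ k) : j = k := by
  rw [av_lt σ hj, av_lt σ hk] at h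
  have h2 : σ ⟨j, hj⟩ = σ ⟨k, hk⟩ := Fin.ext h
  have := σ.injective h2
  exact congrArg Fin.val this

lemma av_p {n : ℕ} (σ : Equiv.Perm (Fin (n+1))) :
    av n σ ((σ⁻¹ 0 : Fin (n+1)) : ℕ) = 0 := by
  rw [av_lt σ (σ⁻¹ 0).2]
  have : (⟨((σ⁻¹ 0 : Fin (n+1)) : ℕ), (σ⁻¹ 0).2⟩ : Fin (n+1)) = σ⁻¹ 0 := rfl
  rw [this, Equiv.Perm.inv_def, Equiv.apply_symm_apply]
  rfl

lemma av_zero {n : ℕ} (σ : Equiv.Perm (Fin (n+1))) {j : ℕ} (hj : j < n+1)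
    (h : av n σ j = 0) : j = ((σ⁻¹ 0 : Fin (n+1)) : ℕ) :=
  av_inj σ hj (σ⁻¹ 0).2 (by rw [h, av_p])

lemma mem_DT_iff {n : ℕ} (σ : Equiv.Perm (Fin (n+1))) (m : ℕ) :
    m ∈ DT n σ ↔ ∃ j : ℕ, j < n ∧ av n σ (j+1) < av n σ j ∧ av n σ j + 1 = m := by
  simp only [DT, descSet, mem_image, mem_filter, mem_univ, true_and]
  constructor
  · rintro ⟨i, hi, rfl⟩
    refine ⟨i.1, i.2, ?_, ?_⟩
    · rw [av_lt σ (by omega : (i:ℕ)+1 < n+1), av_lt σ (by omega : (i:ℕ) < n+1)]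
      exact hi
    · rw [av_lt σ (by omega : (i:ℕ) < n+1)]
      rfl
  · rintro ⟨j, h, hd, hm⟩
    rw [av_lt σ (by omega : j+1 < n+1), av_lt σ (by omega : j < n+1)] at hd
    rw [av_lt σ (by omega : j < n+1)] at hm
    exact ⟨⟨j, h⟩, hd, hm⟩

lemma av_Phi {n : ℕ} (σ : Equiv.Perm (Fin (n+1))) {j : ℕ} (hj : j < n+1) :
    av n (Phi n σ) j = gv n (av n σ (rv n ((σ⁻¹ 0 : Fin (n+1)) : ℕ) j)) := by
  rw [av_lt (Phi n σ) hj,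
    av_lt σ (Nat.lt_succ_of_le (rv_le (Nat.lt_succ_iff.1 (σ⁻¹ 0).2) (Nat.lt_succ_iff.1 hj)))]
  rfl

end DTAux

namespace DTAux

lemma Phi_inv0 {n : ℕ} (σ : Equiv.Perm (Fin (n+1))) :
    (((Phi n σ)⁻¹ 0 : Fin (n+1)) : ℕ) = n - ((σ⁻¹ 0 : Fin (n+1)) : ℕ) := by
  set p : ℕ := ((σ⁻¹ 0 : Fin (n+1)) : ℕ) with hp
  have hpn : p ≤ n := Nat.lt_succ_iff.1 (σ⁻¹ 0).2
  have h0 : av n (Phi n σ) (n - p) = 0 := by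
    rw [av_Phi σ (by omega : n - p < n+1)]
    have hr : rv n p (n - p) = p := by unfold rv; split_ifs <;> omega
    rw [hr, av_p, gv_zero]
  have := av_zero (Phi n σ) (by omega : n - p < n+1) h0
  omega

lemma Phi_Phi {n : ℕ} (σ : Equiv.Perm (Fin (n+1))) : Phi n (Phi n σ) = σ := by
  set p : ℕ := ((σ⁻¹ 0 : Fin (n+1)) : ℕ) with hp
  have hpn : p ≤ n := Nat.lt_succ_iff.1 (σ⁻¹ 0).2
  apply Equiv.ext
  intro x
  apply Fin.ext
  have h1 : (Phi n (Phi n σ) x : ℕ) = av n (Phi n (Phi n σ)) (x : ℕ) := (av_lt _ x.2).symm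
  have h2 : (σ x : ℕ) = av n σ (x : ℕ) := (av_lt _ x.2).symm
  rw [h1, h2, av_Phi (Phi n σ) x.2, Phi_inv0 σ, ← hp,
    av_Phi σ (Nat.lt_succ_of_le (rv_le (by omega) (Nat.lt_succ_iff.1 x.2))),
    rv_rv' hpn (Nat.lt_succ_iff.1 x.2), gv_gv (av_le σ _)]

lemma DT_Phi {n : ℕ} (σ : Equiv.Perm (Fin (n+1))) :
    DT n (Phi n σ) = (Icc 2 (n+1) \ DT n σ).image (fun k => n + 3 - k) := by
  set p : ℕ := ((σ⁻¹ 0 : Fin (n+1)) : ℕ) with hp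
  have hpn : p ≤ n := Nat.lt_succ_iff.1 (σ⁻¹ 0).2
  have hap : av n σ p = 0 := av_p σ
  have hDTPhi : ∀ m, m ∈ DT n (Phi n σ) ↔ ∃ j : ℕ, j < n ∧
      gv n (av n σ (rv n p (j+1))) < gv n (av n σ (rv n p j)) ∧
      gv n (av n σ (rv n p j)) + 1 = m := by
    intro m
    rw [mem_DT_iff]
    constructor
    · rintro ⟨j, hj, hd, hm⟩
      rw [av_Phi σ (by omega), av_Phi σ (by omega)] at hd
      rw [av_Phi σ (by omega)] at hm
      exact ⟨j, hj, hd, hm⟩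
    · rintro ⟨j, hj, hd, hm⟩
      refine ⟨j, hj, ?_, ?_⟩
      · rw [av_Phi σ (by omega), av_Phi σ (by omega)]; exact hd
      · rw [av_Phi σ (by omega)]; exact hm
  ext m
  rw [hDTPhi]
  simp only [mem_image, mem_sdiff, mem_Icc, mem_DT_iff]
  constructor
  · rintro ⟨j, hj, hdesc, hm⟩
    by_cases hc : j + p = n
    · exfalso
      have ht : rv n p j = p := by unfold rv; split_ifs <;> omega
      rw [ht, hap, gv_zero] at hdesc
      omega
    · by_cases hb : j + p + 1 = n
      · -- case B : pair (position n, position p), descent with top av σ n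
        have ht : rv n p j = n := by unfold rv; split_ifs <;> omega
        have ht' : rv n p (j+1) = p := by unfold rv; split_ifs <;> omega
        rw [ht, ht', hap, gv_zero] at hdesc
        rw [ht] at hm
        have hvle : av n σ n ≤ n := av_le σ n
        have hv0 : av n σ n ≠ 0 := by
          intro h
          have := av_zero σ (by omega) h
          omega
        rw [gv_ne hv0] at hm
        refine ⟨av n σ n + 1, ⟨⟨by omega, by omega⟩, ?_⟩, by omega⟩
        rintro ⟨j', hj', hd', hm'⟩
        have : j' = n := av_inj σ (by omega) (by omega) (by omega)
        omega
      · -- cases A and D : pair (t, t+1) with t ≠ p, t+1 ≠ p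
        obtain ⟨ht', hle', hne, hne'⟩ :
            rv n p (j+1) = rv n p j + 1 ∧ rv n p j + 1 ≤ n ∧ rv n p j ≠ p ∧ rv n p j + 1 ≠ p := by
          unfold rv; split_ifs <;> omega
        set t : ℕ := rv n p j with htdef
        have hv0 : av n σ t ≠ 0 := fun h => hne (av_zero σ (by omega) h)
        have hu0 : av n σ (t+1) ≠ 0 := fun h => hne' (av_zero σ (by omega) h)
        have hvle : av n σ t ≤ n := av_le σ t
        have hule : av n σ (t+1) ≤ n := av_le σ (t+1)
        rw [ht', gv_ne hv0, gv_ne hu0] at hdesc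
        rw [gv_ne hv0] at hm
        refine ⟨av n σ t + 1, ⟨⟨by omega, by omega⟩, ?_⟩, by omega⟩
        rintro ⟨j', hj', hd', hm'⟩
        have hj't : j' = t := av_inj σ (by omega) (by omega) (by omega)
        rw [hj't] at hd' hm'
        omega
  · rintro ⟨k, ⟨⟨hk2, hk1⟩, hkDT⟩, hm⟩
    -- the position t of value k-1
    have hk' : k - 1 < n + 1 := by omega
    obtain ⟨t, htlt, hat⟩ : ∃ t, t < n+1 ∧ av n σ t = k - 1 := by
      refine ⟨((σ⁻¹ ⟨k-1, hk'⟩ : Fin (n+1)) : ℕ), (σ⁻¹ ⟨k-1, hk'⟩).2, ?_⟩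
      rw [av_lt σ (σ⁻¹ ⟨k-1, hk'⟩).2]
      show ((σ (σ⁻¹ ⟨k-1, hk'⟩)) : ℕ) = k - 1
      rw [Equiv.Perm.inv_def, Equiv.apply_symm_apply]
    have htn : t ≤ n := by omega
    have htp : t ≠ p := by
      intro h
      rw [h, hap] at hat
      omega
    by_cases hteq : t = n
    · -- value k-1 is at the last position
      rw [hteq] at hat
      have hv0 : av n σ n ≠ 0 := by omega
      have hvle := av_le σ n
      have hpltn : p < n := by omega
      refine ⟨n - p - 1, by omega, ?_, ?_⟩
      · have h1 : rv n p (n-p-1) = n := by unfold rv; split_ifs <;> omega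
        have h2 : rv n p (n-p-1+1) = p := by unfold rv; split_ifs <;> omega
        rw [h1, h2, hap, gv_zero, gv_ne hv0]
        omega
      · have h1 : rv n p (n-p-1) = n := by unfold rv; split_ifs <;> omega
        rw [h1, gv_ne hv0]
        omega
    · have htn' : t < n := by omega
      have hne : av n σ (t+1) ≠ av n σ t := by
        intro h
        have := av_inj σ (by omega) (by omega) h
        omega
      have hgt : av n σ t < av n σ (t+1) := by
        rcases Nat.lt_or_ge (av n σ (t+1)) (av n σ t) with h | h
        · exact absurd ⟨t, htn', h, by omega⟩ hkDT
        · omega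
      have ht1p : t + 1 ≠ p := by
        intro h
        rw [h, hap] at hgt
        omega
      have hule : av n σ (t+1) ≤ n := av_le σ (t+1)
      rcases Nat.lt_or_ge t p with hcase | hcase
      · -- t ≤ p - 2 : use j = t + n + 1 - p
        refine ⟨t + n + 1 - p, by omega, ?_, ?_⟩
        · have h1 : rv n p (t+n+1-p) = t := by unfold rv; split_ifs <;> omega
          have h2 : rv n p (t+n+1-p+1) = t+1 := by unfold rv; split_ifs <;> omega
          rw [h1, h2, gv_ne (by omega : av n σ t ≠ 0), gv_ne (by omega : av n σ (t+1) ≠ 0)]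
          omega
        · have h1 : rv n p (t+n+1-p) = t := by unfold rv; split_ifs <;> omega
          rw [h1, gv_ne (by omega : av n σ t ≠ 0)]
          omega
      · -- t ≥ p + 1 : use j = t - p - 1
        refine ⟨t - p - 1, by omega, ?_, ?_⟩
        · have h1 : rv n p (t-p-1) = t := by unfold rv; split_ifs <;> omega
          have h2 : rv n p (t-p-1+1) = t+1 := by unfold rv; split_ifs <;> omega
          rw [h1, h2, gv_ne (by omega : av n σ t ≠ 0), gv_ne (by omega : av n σ (t+1) ≠ 0)]
          omega
        · have h1 : rv n p (t-p-1) = t := by unfold rv; split_ifs <;> omega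
          rw [h1, gv_ne (by omega : av n σ t ≠ 0)]
          omega

end DTAux

namespace DTAux

lemma tau_tau {n : ℕ} {K : Finset ℕ} (hK : K ⊆ Finset.Icc 2 (n+1)) :
    (Finset.Icc 2 (n+1) \ K.image (fun k => n+3-k)).image (fun k => n+3-k)
      = Finset.Icc 2 (n+1) \ K := by
  ext m
  simp only [mem_image, mem_sdiff, mem_Icc]
  constructor
  · rintro ⟨x, ⟨⟨hx2, hx1⟩, hnot⟩, rfl⟩
    refine ⟨⟨by omega, by omega⟩, fun hm => hnot ⟨n+3-x, hm, by omega⟩⟩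
  · rintro ⟨⟨hm2, hm1⟩, hm⟩
    refine ⟨n+3-m, ⟨⟨by omega, by omega⟩, ?_⟩, by omega⟩
    rintro ⟨k, hk, hkm⟩
    have hkb := hK hk
    rw [mem_Icc] at hkb
    have : k = m := by omega
    exact hm (this ▸ hk)

end DTAux


open DTAux

/-- With `τ(i) = n+3-i`, the number of permutations with descent top set `[2,n+1] ∖ K`
equals the number of permutations with descent top set `τ(K)`. -/
theorem card_DT_compl_eq_card_DT_tau (n : ℕ) (K : Finset ℕ) (hK : K ⊆ Finset.Icc 2 (n+1)) :
    (Finset.univ.filter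
        (fun σ : Equiv.Perm (Fin (n+1)) => DT n σ = Finset.Icc 2 (n+1) \ K)).card =
      (Finset.univ.filter
        (fun σ : Equiv.Perm (Fin (n+1)) => DT n σ = K.image (fun k => n + 3 - k))).card := by
  have hinjPhi : Function.Injective (Phi n) :=
    Function.LeftInverse.injective (g := Phi n) Phi_Phi
  have himg : (Finset.univ.filter
        (fun σ : Equiv.Perm (Fin (n+1)) => DT n σ = Finset.Icc 2 (n+1) \ K)).image (Phi n) =
      Finset.univ.filter
        (fun σ : Equiv.Perm (Fin (n+1)) => DT n σ = K.image (fun k => n + 3 - k)) := by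
    ext π
    simp only [mem_image, mem_filter, mem_univ, true_and]
    constructor
    · rintro ⟨σ, hσ, rfl⟩
      rw [DT_Phi, hσ, sdiff_sdiff_right_self, Finset.inf_eq_inter,
        Finset.inter_eq_right.2 hK]
    · intro hπ
      refine ⟨Phi n π, ?_, Phi_Phi π⟩
      rw [DT_Phi, hπ, tau_tau hK]
  rw [← himg, Finset.card_image_of_injective _ hinjPhi]
end

section
/- Let J = {j_1 < ... < j_k} ⊆ [2, n+1], and write τ_s(i) = s+3−i. Then α(τ_{n+1}(J))!̂ = (|J|+1) · α(τ_n(J))!̂. -/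
open Finset

lemma sort_image_add_one (X : Finset ℕ) :
    (X.image (· + 1)).sort (· ≤ ·) = (X.sort (· ≤ ·)).map (· + 1) := by
  refine List.Perm.eq_of_pairwise' (Finset.pairwise_sort _ _)
    (List.Pairwise.map _ (fun a b h => by omega) (Finset.pairwise_sort X (· ≤ ·))) ?_
  · rw [← Multiset.coe_eq_coe]
    have h1 : ((X.image (· + 1)).sort (· ≤ ·) : Multiset ℕ) = (X.image (· + 1)).val :=
      Finset.sort_eq _ _
    have h2 : (X.image (· + 1)).val = X.val.map (· + 1) := by
      rw [Finset.image_val, Multiset.Nodup.dedup]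
      exact Multiset.Nodup.map (fun a b => by omega) X.nodup
    rw [h1, h2, ← Finset.sort_eq X (· ≤ ·)]
    exact Multiset.map_coe _ _

lemma hatFac_cons_s13 (a : ℕ) (D : List ℕ) :
    hatFac (a :: D) =
      (D.length + 2) ^ a *
        ((D.zipIdx 1).map (fun p => (D.length + 2 - p.2) ^ p.1)).prod := by
  simp [hatFac, List.zipIdx_cons]

lemma alphaHat_shift (X : Finset ℕ) (hX : ∀ x ∈ X, 1 ≤ x) :
    alphaHat (X.image (· + 1)) = (X.card + 1) * alphaHat X := by
  rcases X.eq_empty_or_nonempty with rfl | hne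
  · simp [alphaHat, hatFac]
  · obtain ⟨x, t, ht⟩ : ∃ x t, X.sort (· ≤ ·) = x :: t := by
      cases h : X.sort (· ≤ ·) with
      | nil =>
          exfalso
          have hl := Finset.length_sort (s := X) (· ≤ ·)
          rw [h] at hl
          simp only [List.length_nil] at hl
          exact hne.ne_empty (Finset.card_eq_zero.mp hl.symm)
      | cons x t => exact ⟨x, t, rfl⟩
    have hx : 1 ≤ x := by
      apply hX
      rw [← Finset.mem_sort (· ≤ ·), ht]
      simp
    rw [alphaHat, alphaHat, sort_image_add_one, ht]
    have hzip : ∀ (l l' : List ℕ),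
        List.zipWith (fun a b => b - a) (l.map (· + 1)) (l'.map (· + 1)) =
          List.zipWith (fun a b => b - a) l l' := by
      intro l l'
      rw [List.zipWith_map]
      congr 1
      ext a b
      omega
    have hz : List.zipWith (fun a b => b - a) ((x + 1) :: t.map (· + 1)) (t.map (· + 1)) =
        List.zipWith (fun a b => b - a) (x :: t) t := by
      have h := hzip (x :: t) t
      simpa using h
    simp only [List.map_cons, List.zipWith_cons_cons]
    rw [hz]
    have h1 : x + 1 - 1 = x := by omega
    rw [h1]
    set D := List.zipWith (fun a b => b - a) (x :: t) t with hD
    rw [hatFac_cons_s13, hatFac_cons_s13]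
    have hcard : X.card = D.length + 1 := by
      have : X.card = (X.sort (· ≤ ·)).length := (Finset.length_sort _).symm
      rw [ht] at this
      simp only [List.length_cons] at this
      rw [this, hD, List.length_zipWith]
      simp
    rw [hcard]
    have : (D.length + 2) ^ x = (D.length + 1 + 1) * (D.length + 2) ^ (x - 1) := by
      conv_lhs => rw [show x = 1 + (x - 1) by omega]
      rw [pow_add, pow_one]
    rw [this]
    ring

/-- With `τ_s(i) = s+3-i`: `α(τ_{n+1}(J))!̂ = (|J|+1) ⋅ α(τ_n(J))!̂`. -/
theorem alphaHat_tau_succ (n : ℕ) (J : Finset ℕ) (hJ : J ⊆ Finset.Icc 2 (n+1)) :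
    alphaHat (J.image (fun j => n + 4 - j)) =
      (J.card + 1) * alphaHat (J.image (fun j => n + 3 - j)) := by
  have himg : J.image (fun j => n + 4 - j) = (J.image (fun j => n + 3 - j)).image (· + 1) := by
    rw [Finset.image_image]
    apply Finset.image_congr
    intro j hj
    have := hJ hj
    simp only [Finset.mem_Icc] at this
    simp only [Function.comp_apply]
    omega
  have hcard : (J.image (fun j => n + 3 - j)).card = J.card := by
    apply Finset.card_image_of_injOn
    intro a ha b hb hab
    have h1 := hJ ha; have h2 := hJ hb
    simp only [Finset.mem_Icc] at h1 h2
    have hab' : n + 3 - a = n + 3 - b := hab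
    omega
  rw [himg, alphaHat_shift, hcard]
  intro x hx
  simp only [Finset.mem_image] at hx
  obtain ⟨j, hj, rfl⟩ := hx
  have := hJ hj
  simp only [Finset.mem_Icc] at this
  omega
end

section
/- For K ⊆ [2, n+1], the number of permutations in S_{n+2} with descent top set exactly [2, n+2] ∖ (K ∪ {n+2}) equals the number of permutations in S_{n+1} with descent top set exactly [2, n+1] ∖ K. -/
open Finset

/-- Extend a permutation of `Fin (n+1)` to `Fin (n+2)` fixing the last element. -/
def extLast (n : ℕ) (σ : Equiv.Perm (Fin (n+1))) : Equiv.Perm (Fin (n+2)) where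
  toFun := Fin.lastCases (Fin.last (n+1)) (fun i => (σ i).castSucc)
  invFun := Fin.lastCases (Fin.last (n+1)) (fun i => (σ⁻¹ i).castSucc)
  left_inv := by
    intro x
    induction x using Fin.lastCases with
    | last => simp
    | cast i => simp
  right_inv := by
    intro x
    induction x using Fin.lastCases with
    | last => simp
    | cast i => simp

@[simp] lemma extLast_castSucc (n : ℕ) (σ : Equiv.Perm (Fin (n+1))) (i : Fin (n+1)) :
    extLast n σ i.castSucc = (σ i).castSucc := by
  simp [extLast]

@[simp] lemma extLast_last (n : ℕ) (σ : Equiv.Perm (Fin (n+1))) :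
    extLast n σ (Fin.last (n+1)) = Fin.last (n+1) := by
  simp [extLast]

lemma DT_extLast (n : ℕ) (σ : Equiv.Perm (Fin (n+1))) :
    DT (n+1) (extLast n σ) = DT n σ := by
  ext x
  simp only [DT, descSet, mem_image, mem_filter, mem_univ, true_and]
  constructor
  · rintro ⟨i, hd, hv⟩
    induction i using Fin.lastCases with
    | last =>
      rw [Fin.succ_last] at hd
      simp at hd
      exact absurd hd (by simp [Fin.le_last, not_lt])
    | cast j =>
      refine ⟨j, ?_, ?_⟩
      · rw [Fin.succ_castSucc] at hd
        rw [extLast_castSucc, extLast_castSucc] at hd; exact Fin.castSucc_lt_castSucc_iff.mp hd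
      · simpa using hv
  · rintro ⟨j, hd, hv⟩
    refine ⟨j.castSucc, ?_, ?_⟩
    · rw [Fin.succ_castSucc]
      rw [extLast_castSucc, extLast_castSucc]; exact Fin.castSucc_lt_castSucc_iff.mpr hd
    · simpa using hv

lemma fix_last_of_not_mem (n : ℕ) (μ : Equiv.Perm (Fin (n+2)))
    (h : (n + 2 : ℕ) ∉ DT (n+1) μ) : μ (Fin.last (n+1)) = Fin.last (n+1) := by
  by_contra hne
  have h1 : μ.symm (Fin.last (n+1)) ≠ Fin.last (n+1) := by
    intro he
    apply hne
    simpa using (congrArg μ he).symm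
  obtain ⟨i, hi⟩ := Fin.exists_castSucc_eq.mpr h1
  have hμ : μ i.castSucc = Fin.last (n+1) := by rw [hi]; simp
  apply h
  simp only [DT, descSet, mem_image, mem_filter, mem_univ, true_and]
  refine ⟨i, ?_, by rw [hμ]; simp⟩
  rw [hμ, Fin.lt_last_iff_ne_last]
  intro he
  exact absurd (μ.injective (hμ.trans he.symm))
    (by simp [Fin.ext_iff, Fin.val_succ])

/-- The number of permutations in `S_{n+2}` with descent top set exactly
`[2,n+2] ∖ (K ∪ {n+2})` equals the number in `S_{n+1}` with descent top set exactly
`[2,n+1] ∖ K`. -/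
theorem card_DT_max_eq (n : ℕ) (K : Finset ℕ) (hK : K ⊆ Finset.Icc 2 (n+1)) :
    (Finset.univ.filter (fun μ : Equiv.Perm (Fin (n+2)) =>
        DT (n+1) μ = Finset.Icc 2 (n+2) \ (K ∪ {n+2}))).card =
      (Finset.univ.filter (fun σ : Equiv.Perm (Fin (n+1)) =>
        DT n σ = Finset.Icc 2 (n+1) \ K)).card := by
  have htarget : Finset.Icc 2 (n+2) \ (K ∪ {n+2}) = Finset.Icc 2 (n+1) \ K := by
    ext x
    simp only [mem_sdiff, mem_Icc, mem_union, mem_singleton, not_or]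
    constructor
    · rintro ⟨⟨h2, hx⟩, hK', hne⟩; exact ⟨⟨h2, by omega⟩, hK'⟩
    · rintro ⟨⟨h2, hx⟩, hK'⟩; exact ⟨⟨h2, by omega⟩, hK', by omega⟩
  have hnot : (n + 2 : ℕ) ∉ Finset.Icc 2 (n+1) \ K := by simp
  refine (Finset.card_bij (fun σ _ => extLast n σ) ?_ ?_ ?_).symm
  · intro σ hσ
    simp only [mem_filter, mem_univ, true_and] at hσ ⊢
    rw [DT_extLast, htarget, hσ]
  · intro σ₁ _ σ₂ _ he
    ext i
    have := congrArg (fun μ : Equiv.Perm (Fin (n+2)) => μ i.castSucc) he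
    simpa [Fin.ext_iff] using this
  · intro μ hμ
    simp only [mem_filter, mem_univ, true_and] at hμ
    have hfix : μ (Fin.last (n+1)) = Fin.last (n+1) := by
      apply fix_last_of_not_mem
      rw [hμ, htarget]; exact hnot
    set ν : Equiv.Perm (Option (Fin (n+1))) := finSuccEquivLast.permCongr μ with hν
    have hνnone : ν none = none := by
      simp [hν, Equiv.permCongr_apply, hfix]
    have hνsome : ∀ i, ∃ j, ν (some i) = some j := by
      intro i
      have : μ i.castSucc ≠ Fin.last (n+1) := by
        intro he
        exact absurd (μ.injective (he.trans hfix.symm)) (by simp [Fin.ext_iff]; omega)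
      obtain ⟨j, hj⟩ := Fin.exists_castSucc_eq.mpr this
      exact ⟨j, by simp [hν, Equiv.permCongr_apply, ← hj]⟩
    refine ⟨Equiv.removeNone ν, ?_, ?_⟩
    · simp only [mem_filter, mem_univ, true_and]
      have : extLast n (Equiv.removeNone ν) = μ := ?_
      · rw [← DT_extLast n (Equiv.removeNone ν), this, hμ, htarget]
      · ext x
        induction x using Fin.lastCases with
        | last => simp [hfix]
        | cast i =>
          rw [extLast_castSucc]
          obtain ⟨j, hj⟩ := hνsome i
          have h2 : some (Equiv.removeNone ν i) = ν (some i) :=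
            Equiv.removeNone_some ν ⟨j, hj⟩
          have h3 : ν (some i) = finSuccEquivLast (μ i.castSucc) := by
            simp [hν, Equiv.permCongr_apply]
          rw [h3] at h2
          have : μ i.castSucc ≠ Fin.last (n+1) := by
            intro he
            exact absurd (μ.injective (he.trans hfix.symm)) (by simp [Fin.ext_iff]; omega)
          obtain ⟨k, hk⟩ := Fin.exists_castSucc_eq.mpr this
          rw [← hk] at h2 ⊢
          simp at h2
          rw [h2]
    · ext x
      induction x using Fin.lastCases with
      | last => simp [hfix]
      | cast i =>
        rw [extLast_castSucc]
        obtain ⟨j, hj⟩ := hνsome i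
        have h2 : some (Equiv.removeNone ν i) = ν (some i) :=
          Equiv.removeNone_some ν ⟨j, hj⟩
        have h3 : ν (some i) = finSuccEquivLast (μ i.castSucc) := by
          simp [hν, Equiv.permCongr_apply]
        rw [h3] at h2
        have : μ i.castSucc ≠ Fin.last (n+1) := by
          intro he
          exact absurd (μ.injective (he.trans hfix.symm)) (by simp [Fin.ext_iff]; omega)
        obtain ⟨k, hk⟩ := Fin.exists_castSucc_eq.mpr this
        rw [← hk] at h2 ⊢
        simp at h2
        rw [h2]
end
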